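/- Let θ ∈ (0,1) and λ ∈ (0,1]. For every δ > 0 there exists a constant C (depending only on δ, θ, λ) such that for all |g| ≤ δ, |h(g) − (1/2)·λ(1−λ)·θ(1−θ)·g²| ≤ C·|g|³, where h(g) = θ·log(1 − λ + λ·e^{−(1−θ)g}) + (1−θ)·log(1 − λ + λ·e^{θg}). That is, the one-block log-liquidity growth of the partially active G3M satisfies ℓ_n − ℓ_{n−1} = (1/2)·λ(1−λ)·θ(1−θ)·g_n² + O(|g_n|³) as g_n → 0. -/

import Mathlib

open Real

/-- Cubic Taylor bound for `t ↦ log (1 - lam + lam * exp t)` around `0`. -/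
lemma E_bound {lam : ℝ} (hl0 : 0 < lam) (hl1 : lam ≤ 1) (t : ℝ) :
    |Real.log (1 - lam + lam * Real.exp t) - lam * t - lam * (1 - lam) / 2 * t ^ 2|
      ≤ |t| ^ 3 := by
  have hu : ∀ s : ℝ, 0 < 1 - lam + lam * Real.exp s := by
    intro s
    nlinarith [Real.exp_pos s]
  set u : ℝ → ℝ := fun s => 1 - lam + lam * Real.exp s with hu_def
  set p : ℝ → ℝ := fun s => lam * Real.exp s / u s with hp_def
  have hp0 : ∀ s, 0 < p s := fun s => div_pos (by positivity) (hu s)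
  have hp1 : ∀ s, p s ≤ 1 := by
    intro s
    rw [hp_def]
    rw [div_le_one (hu s)]
    nlinarith [Real.exp_pos s]
  have hdu : ∀ s, HasDerivAt u (lam * Real.exp s) s := fun s =>
    ((Real.hasDerivAt_exp s).const_mul lam).const_add (1 - lam)
  have hdp : ∀ s, HasDerivAt p (p s - (p s) ^ 2) s := by
    intro s
    have h1 : HasDerivAt (fun x => lam * Real.exp x) (lam * Real.exp s) s :=
      (Real.hasDerivAt_exp s).const_mul lam
    have h2 := h1.div (hdu s) (ne_of_gt (hu s))
    refine (h2 : HasDerivAt p _ s).congr_deriv ?_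
    have := hu s
    have hne : u s ≠ 0 := ne_of_gt (hu s)
    simp only [hp_def]
    field_simp
  set E : ℝ → ℝ := fun s => Real.log (u s) - lam * s - lam * (1 - lam) / 2 * s ^ 2
    with hE_def
  set E1 : ℝ → ℝ := fun s => p s - lam - lam * (1 - lam) * s with hE1_def
  set E2 : ℝ → ℝ := fun s => p s - (p s) ^ 2 - lam * (1 - lam) with hE2_def
  have hdE : ∀ s, HasDerivAt E (E1 s) s := by
    intro s
    have hlog : HasDerivAt (fun x => Real.log (u x)) (lam * Real.exp s / u s) s :=
      (hdu s).log (ne_of_gt (hu s))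
    have hlin : HasDerivAt (fun x : ℝ => lam * x) (lam * 1) s :=
      (hasDerivAt_id s).const_mul lam
    have hsq : HasDerivAt (fun x : ℝ => lam * (1 - lam) / 2 * x ^ 2)
        (lam * (1 - lam) / 2 * (2 * s ^ 1)) s := by
      simpa using ((hasDerivAt_pow 2 s).const_mul (lam * (1 - lam) / 2))
    have := (hlog.sub hlin).sub hsq
    refine (this : HasDerivAt E _ s).congr_deriv ?_
    simp only [hE1_def, hp_def]
    ring
  have hdE1 : ∀ s, HasDerivAt E1 (E2 s) s := by
    intro s
    have hlin : HasDerivAt (fun x : ℝ => lam * (1 - lam) * x) (lam * (1 - lam) * 1) s :=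
      (hasDerivAt_id s).const_mul (lam * (1 - lam))
    have := ((hdp s).sub_const lam).sub hlin
    refine (this : HasDerivAt E1 _ s).congr_deriv ?_
    simp [hE2_def]
  have hdE2 : ∀ s, HasDerivAt E2 ((p s - (p s) ^ 2) * (1 - 2 * p s)) s := by
    intro s
    have := ((hdp s).sub ((hdp s).pow 2)).sub_const (lam * (1 - lam))
    refine (this : HasDerivAt E2 _ s).congr_deriv ?_
    ring
  have hE3bound : ∀ s, |(p s - (p s) ^ 2) * (1 - 2 * p s)| ≤ 1 := by
    intro s
    have h0 := hp0 s
    have h1 := hp1 s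
    rw [abs_le]
    constructor <;> nlinarith [sq_nonneg (p s), sq_nonneg (1 - p s), sq_nonneg (1 - 2 * p s)]
  have hp_zero : p 0 = lam := by
    simp [hp_def, hu_def]
  have hE0 : E 0 = 0 := by
    simp [hE_def, hu_def]
  have hE10 : E1 0 = 0 := by
    simp [hE1_def, hp_zero]
  have hE20 : E2 0 = 0 := by
    simp [hE2_def, hp_zero]
    ring
  -- Step B : |E2 s| ≤ |s| for all s
  have hB : ∀ s : ℝ, |E2 s| ≤ |s| := by
    intro s
    have := Convex.norm_image_sub_le_of_norm_hasDerivWithin_le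
      (f := E2) (f' := fun x => (p x - (p x) ^ 2) * (1 - 2 * p x)) (C := 1)
      (s := Set.uIcc 0 s)
      (fun x _ => (hdE2 x).hasDerivWithinAt)
      (fun x _ => by rw [Real.norm_eq_abs]; exact hE3bound x)
      (convex_uIcc 0 s) Set.left_mem_uIcc Set.right_mem_uIcc
    simpa [Real.norm_eq_abs, hE20] using this
  -- fixed t from now on
  have habs : ∀ x ∈ Set.uIcc 0 t, |x| ≤ |t| := by
    intro x hx
    rw [abs_le]
    rcases Set.mem_uIcc.mp hx with ⟨h1, h2⟩ | ⟨h1, h2⟩ <;> constructor <;>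
      linarith [le_abs_self t, neg_abs_le t, abs_nonneg t]
  -- Step C : |E1 y| ≤ |t| * |t| for all y ∈ uIcc 0 t
  have hC : ∀ y ∈ Set.uIcc 0 t, |E1 y| ≤ |t| * |t| := by
    intro y hy
    have := Convex.norm_image_sub_le_of_norm_hasDerivWithin_le
      (f := E1) (f' := E2) (C := |t|) (s := Set.uIcc 0 t)
      (fun x _ => (hdE1 x).hasDerivWithinAt)
      (fun x hx => by
        rw [Real.norm_eq_abs]
        exact le_trans (hB x) (habs x hx))
      (convex_uIcc 0 t) Set.left_mem_uIcc hy
    rw [Real.norm_eq_abs, Real.norm_eq_abs, hE10, sub_zero, sub_zero] at this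
    exact le_trans this (by
      have := habs y hy
      nlinarith [abs_nonneg t, abs_nonneg y])
  -- Step D : |E t| ≤ |t|^3
  have hD : |E t| ≤ |t| ^ 3 := by
    have := Convex.norm_image_sub_le_of_norm_hasDerivWithin_le
      (f := E) (f' := E1) (C := |t| * |t|) (s := Set.uIcc 0 t)
      (fun x _ => (hdE x).hasDerivWithinAt)
      (fun x hx => by rw [Real.norm_eq_abs]; exact hC x hx)
      (convex_uIcc 0 t) Set.left_mem_uIcc Set.right_mem_uIcc
    rw [Real.norm_eq_abs, Real.norm_eq_abs, hE0, sub_zero, sub_zero] at this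
    calc |E t| ≤ |t| * |t| * |t| := this
      _ = |t| ^ 3 := by ring
  have heq : E t = Real.log (1 - lam + lam * Real.exp t) - lam * t
      - lam * (1 - lam) / 2 * t ^ 2 := rfl
  rw [← heq]
  exact hD

/-- One-block change in log-liquidity of the partially active G3M at
pre-arbitrage gap `g`. -/
noncomputable def liqGrowth (θ lam g : ℝ) : ℝ :=
  θ * Real.log (1 - lam + lam * Real.exp (-(1 - θ) * g))
    + (1 - θ) * Real.log (1 - lam + lam * Real.exp (θ * g))

theorem stmt12 (θ lam : ℝ) (hθ : θ ∈ Set.Ioo (0:ℝ) 1) (hlam : lam ∈ Set.Ioc (0:ℝ) 1) :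
    ∀ δ > (0:ℝ), ∃ C : ℝ, ∀ g : ℝ, |g| ≤ δ →
      |liqGrowth θ lam g - 1 / 2 * (lam * (1 - lam)) * (θ * (1 - θ)) * g ^ 2|
        ≤ C * |g| ^ 3 := by
  obtain ⟨hθ0, hθ1⟩ := hθ
  obtain ⟨hl0, hl1⟩ := hlam
  intro δ hδ
  refine ⟨1, fun g hg => ?_⟩
  have ha := E_bound hl0 hl1 (-(1 - θ) * g)
  have hb := E_bound hl0 hl1 (θ * g)
  set Ea : ℝ := Real.log (1 - lam + lam * Real.exp (-(1 - θ) * g))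
      - lam * (-(1 - θ) * g) - lam * (1 - lam) / 2 * (-(1 - θ) * g) ^ 2 with hEa
  set Eb : ℝ := Real.log (1 - lam + lam * Real.exp (θ * g))
      - lam * (θ * g) - lam * (1 - lam) / 2 * (θ * g) ^ 2 with hEb
  have hkey : liqGrowth θ lam g - 1 / 2 * (lam * (1 - lam)) * (θ * (1 - θ)) * g ^ 2
      = θ * Ea + (1 - θ) * Eb := by
    rw [hEa, hEb]
    unfold liqGrowth
    ring
  rw [hkey]
  have h1 : |(-(1 - θ) * g)| = (1 - θ) * |g| := by
    rw [abs_mul, abs_neg, abs_of_pos (by linarith : (0:ℝ) < 1 - θ)]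
  have h2 : |θ * g| = θ * |g| := by
    rw [abs_mul, abs_of_pos hθ0]
  rw [h1] at ha
  rw [h2] at hb
  have habs : |θ * Ea + (1 - θ) * Eb| ≤ θ * |Ea| + (1 - θ) * |Eb| := by
    calc |θ * Ea + (1 - θ) * Eb| ≤ |θ * Ea| + |(1 - θ) * Eb| := abs_add_le _ _
      _ = θ * |Ea| + (1 - θ) * |Eb| := by
          rw [abs_mul, abs_mul, abs_of_pos hθ0, abs_of_pos (by linarith : (0:ℝ) < 1 - θ)]
  have hg0 : (0:ℝ) ≤ |g| := abs_nonneg g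
  have hcoef : θ * (1 - θ) ^ 3 + (1 - θ) * θ ^ 3 ≤ 1 := by
    nlinarith [sq_nonneg (θ - 1/2), sq_nonneg θ, sq_nonneg (1 - θ),
      mul_pos hθ0 (show (0:ℝ) < 1 - θ by linarith)]
  have hsum : θ * ((1 - θ) * |g|) ^ 3 + (1 - θ) * (θ * |g|) ^ 3 ≤ 1 * |g| ^ 3 := by
    nlinarith [mul_le_mul_of_nonneg_right hcoef (pow_nonneg hg0 3)]
  linarith [habs, mul_le_mul_of_nonneg_left ha (le_of_lt hθ0),
    mul_le_mul_of_nonneg_left hb (show (0:ℝ) ≤ 1 - θ by linarith), hsum]
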